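/- Let m ≥ 1, let X be a measurable space, let μ be a probability measure on X × Fin m, and let l : Fin m → X → ℝ be a family of measurable logit functions. Assume that for every temperature T > 0 the function (x, y) ↦ log( exp(l y x / T) / ∑_{j=1}^m exp(l j x / T) ) is μ-integrable. Then the expected log-likelihood L(T) = ∫ log( exp(l y x / T) / ∑_j exp(l j x / T) ) dμ(x,y) is a unimodal (quasiconcave) function of T on (0, ∞); that is, for all temperatures 0 < T₁ ≤ T₂ ≤ T₃ one has L(T₂) ≥ min(L(T₁), L(T₃)). -/

import Mathlib

open MeasureTheory Real

lemma key_pointwise {m : ℕ} (hm : 1 ≤ m) (c : Fin m → ℝ) (y : Fin m)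
    {a b β₁ β₂ β₃ : ℝ} (ha : 0 ≤ a) (hb : 0 ≤ b) (hab : a + b = 1)
    (hβ : a * β₁ + b * β₃ = β₂) :
    a * log (exp (c y * β₁) / ∑ j, exp (c j * β₁)) +
      b * log (exp (c y * β₃) / ∑ j, exp (c j * β₃)) ≤
      log (exp (c y * β₂) / ∑ j, exp (c j * β₂)) := by
  have hne : (Finset.univ : Finset (Fin m)).Nonempty := ⟨⟨0, hm⟩, Finset.mem_univ _⟩
  set S : ℝ → ℝ := fun β => ∑ j, exp (c j * β) with hSdef
  have hS : ∀ β, 0 < S β := fun β => Finset.sum_pos (fun j _ => exp_pos _) hne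
  have hlog : ∀ β, log (exp (c y * β) / S β) = c y * β - log (S β) := fun β => by
    rw [log_div (exp_ne_zero _) (hS β).ne', log_exp]
  have hexp2 : ∀ j, exp (c j * β₂) = exp (c j * β₁) ^ a * exp (c j * β₃) ^ b := by
    intro j
    rw [rpow_def_of_pos (exp_pos _), rpow_def_of_pos (exp_pos _), log_exp, log_exp,
      ← exp_add, ← hβ]
    ring_nf
  have hC : 0 < S β₁ ^ a * S β₃ ^ b :=
    mul_pos (rpow_pos_of_pos (hS β₁) _) (rpow_pos_of_pos (hS β₃) _)
  have holder : S β₂ ≤ S β₁ ^ a * S β₃ ^ b := by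
    calc S β₂ = ∑ j, (exp (c j * β₁) / S β₁) ^ a * (exp (c j * β₃) / S β₃) ^ b *
          (S β₁ ^ a * S β₃ ^ b) := by
          refine Finset.sum_congr rfl fun j _ => ?_
          rw [hexp2 j, div_rpow (exp_pos _).le (hS β₁).le,
            div_rpow (exp_pos _).le (hS β₃).le]
          field_simp
          exact (div_self hC.ne').symm
      _ ≤ ∑ j, (a * (exp (c j * β₁) / S β₁) + b * (exp (c j * β₃) / S β₃)) *
          (S β₁ ^ a * S β₃ ^ b) := by
          refine Finset.sum_le_sum fun j _ => ?_
          refine mul_le_mul_of_nonneg_right ?_ hC.le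
          exact Real.geom_mean_le_arith_mean2_weighted ha hb
            (div_nonneg (exp_pos _).le (hS β₁).le)
            (div_nonneg (exp_pos _).le (hS β₃).le) hab
      _ = S β₁ ^ a * S β₃ ^ b := by
          rw [← Finset.sum_mul, Finset.sum_add_distrib, ← Finset.mul_sum, ← Finset.mul_sum,
            ← Finset.sum_div, ← Finset.sum_div]
          rw [hSdef]
          rw [div_self (hS β₁).ne', div_self (hS β₃).ne', mul_one, mul_one, hab, one_mul]
  have hmain : log (S β₂) ≤ a * log (S β₁) + b * log (S β₃) := by
    calc log (S β₂) ≤ log (S β₁ ^ a * S β₃ ^ b) := log_le_log (hS β₂) holder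
      _ = a * log (S β₁) + b * log (S β₃) := by
          rw [log_mul (rpow_pos_of_pos (hS β₁) _).ne' (rpow_pos_of_pos (hS β₃) _).ne',
            log_rpow (hS β₁), log_rpow (hS β₃)]
  have hy : c y * β₂ = a * (c y * β₁) + b * (c y * β₃) := by rw [← hβ]; ring
  rw [hlog, hlog, hlog, hy]
  linarith

/-- The expected temperature-scaled log-likelihood is unimodal (quasiconcave) in the
temperature `T` on `(0, ∞)`. -/
theorem expected_log_likelihood_unimodal
    {X : Type*} [MeasurableSpace X] (m : ℕ) (hm : 1 ≤ m)
    (μ : Measure (X × Fin m)) [IsProbabilityMeasure μ]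
    (l : Fin m → X → ℝ) (hl : ∀ i, Measurable (l i))
    (L : ℝ → ℝ)
    (hL : ∀ T : ℝ, 0 < T →
      L T = ∫ p : X × Fin m,
        Real.log (Real.exp (l p.2 p.1 / T) / ∑ j : Fin m, Real.exp (l j p.1 / T)) ∂μ)
    (hint : ∀ T : ℝ, 0 < T →
      Integrable (fun p : X × Fin m =>
        Real.log (Real.exp (l p.2 p.1 / T) / ∑ j : Fin m, Real.exp (l j p.1 / T))) μ) :
    ∀ T₁ T₂ T₃ : ℝ, 0 < T₁ → T₁ ≤ T₂ → T₂ ≤ T₃ →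
      min (L T₁) (L T₃) ≤ L T₂ := by
  intro T₁ T₂ T₃ hT₁ h12 h23
  have hT₂ : 0 < T₂ := lt_of_lt_of_le hT₁ h12
  have hT₃ : 0 < T₃ := lt_of_lt_of_le hT₂ h23
  rcases eq_or_lt_of_le (h12.trans h23) with h13 | h13
  · have h21 : T₂ = T₁ := le_antisymm (h23.trans h13.symm.le) h12
    rw [h21]
    exact min_le_left _ _
  · set β₁ : ℝ := T₁⁻¹ with hβ₁
    set β₂ : ℝ := T₂⁻¹ with hβ₂
    set β₃ : ℝ := T₃⁻¹ with hβ₃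
    have h32 : β₃ ≤ β₂ := by rw [hβ₂, hβ₃]; gcongr
    have h21 : β₂ ≤ β₁ := by rw [hβ₁, hβ₂]; gcongr
    have h31 : β₃ < β₁ := by rw [hβ₁, hβ₃]; gcongr
    have hD : 0 < β₁ - β₃ := sub_pos.2 h31
    set a : ℝ := (β₂ - β₃) / (β₁ - β₃) with hadef
    set b : ℝ := (β₁ - β₂) / (β₁ - β₃) with hbdef
    have ha : 0 ≤ a := div_nonneg (sub_nonneg.2 h32) hD.le
    have hb : 0 ≤ b := div_nonneg (sub_nonneg.2 h21) hD.le
    have hab : a + b = 1 := by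
      rw [hadef, hbdef, ← add_div]
      rw [show β₂ - β₃ + (β₁ - β₂) = β₁ - β₃ by ring, div_self hD.ne']
    have hβ : a * β₁ + b * β₃ = β₂ := by
      rw [hadef, hbdef]
      field_simp
      ring
    have hpt : ∀ p : X × Fin m,
        a * Real.log (Real.exp (l p.2 p.1 / T₁) / ∑ j : Fin m, Real.exp (l j p.1 / T₁)) +
        b * Real.log (Real.exp (l p.2 p.1 / T₃) / ∑ j : Fin m, Real.exp (l j p.1 / T₃)) ≤
        Real.log (Real.exp (l p.2 p.1 / T₂) / ∑ j : Fin m, Real.exp (l j p.1 / T₂)) := by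
      intro p
      simp only [div_eq_mul_inv, ← hβ₁, ← hβ₂, ← hβ₃]
      exact key_pointwise hm (fun j => l j p.1) p.2 ha hb hab hβ
    have int1 := hint T₁ hT₁
    have int2 := hint T₂ hT₂
    have int3 := hint T₃ hT₃
    have hmono : a * L T₁ + b * L T₃ ≤ L T₂ := by
      rw [hL T₁ hT₁, hL T₃ hT₃, hL T₂ hT₂, ← integral_const_mul, ← integral_const_mul,
        ← integral_add (int1.const_mul a) (int3.const_mul b)]
      exact integral_mono ((int1.const_mul a).add (int3.const_mul b)) int2 hpt
    have h1 : a * min (L T₁) (L T₃) ≤ a * L T₁ :=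
      mul_le_mul_of_nonneg_left (min_le_left _ _) ha
    have h3 : b * min (L T₁) (L T₃) ≤ b * L T₃ :=
      mul_le_mul_of_nonneg_left (min_le_right _ _) hb
    have hmm : a * min (L T₁) (L T₃) + b * min (L T₁) (L T₃) = min (L T₁) (L T₃) := by
      rw [← add_mul, hab, one_mul]
    linarith
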